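/- For every odd integer n ≥ 3, the prime-coprime graph of the dicyclic group Q_{4n} is isomorphic to the join of the prime-coprime graph of the cyclic group Z_{2n} with the empty graph on 2n vertices; that is, Θ(Q_{4n}) ≅ Θ(Z_{2n}) ∨ E_{2n}. -/

import Mathlib

/-- The prime-coprime graph: distinct vertices `g, h` are adjacent iff
`gcd (orderOf g) (orderOf h)` is `1` or a prime. -/
def primeCoprimeGraph (G : Type*) [Monoid G] : SimpleGraph G where
  Adj g h := g ≠ h ∧
    (Nat.gcd (orderOf g) (orderOf h) = 1 ∨ (Nat.gcd (orderOf g) (orderOf h)).Prime)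
  symm := by
    constructor
    rintro g h ⟨hne, hd⟩
    exact ⟨hne.symm, by rwa [Nat.gcd_comm]⟩
  loopless := by constructor; rintro g ⟨hne, -⟩; exact hne rfl

/-- A set of vertices is independent if no two of its elements are adjacent. -/
def IsIndepSet {V : Type*} (Γ : SimpleGraph V) (s : Set V) : Prop :=
  s.Pairwise fun a b => ¬ Γ.Adj a b

open scoped Classical in
/-- The independence number of a graph on a finite vertex set. -/
noncomputable def indepNum {V : Type*} [Fintype V] (Γ : SimpleGraph V) : ℕ :=
  Finset.univ.sup fun s : Finset V => if IsIndepSet Γ (s : Set V) then s.card else 0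

/-- A graph is split if its vertex set can be partitioned into two disjoint nonempty
subsets, one a clique and the other an independent set. -/
def IsSplit {V : Type*} (Γ : SimpleGraph V) : Prop :=
  ∃ K I : Set V, K.Nonempty ∧ I.Nonempty ∧ Disjoint K I ∧ K ∪ I = Set.univ ∧
    Γ.IsClique K ∧ IsIndepSet Γ I

/-- The join of two vertex-disjoint graphs: their disjoint union together with all
edges between the two vertex sets. -/
def graphJoin {V₁ V₂ : Type*} (Γ₁ : SimpleGraph V₁) (Γ₂ : SimpleGraph V₂) :
    SimpleGraph (V₁ ⊕ V₂) where
  Adj x y :=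
    match x, y with
    | Sum.inl a, Sum.inl b => Γ₁.Adj a b
    | Sum.inr a, Sum.inr b => Γ₂.Adj a b
    | Sum.inl _, Sum.inr _ => True
    | Sum.inr _, Sum.inl _ => True
  symm := by
    constructor
    rintro (a | a) (b | b) h
    · exact Γ₁.adj_symm h
    · trivial
    · trivial
    · exact Γ₂.adj_symm h
  loopless := by
    constructor
    rintro (a | a) h
    · exact Γ₁.irrefl h
    · exact Γ₂.irrefl h

lemma orderOf_a_eq_addOrderOf (n : ℕ) [NeZero n] (i : ZMod (2 * n)) :
    orderOf (QuaternionGroup.a i) = addOrderOf i := by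
  have h2n : (2 * n) ≠ 0 := by
    have := NeZero.ne n; omega
  have : addOrderOf ((i.val : ℕ) : ZMod (2 * n)) = 2 * n / Nat.gcd (2 * n) i.val :=
    ZMod.addOrderOf_coe _ h2n
  rw [QuaternionGroup.orderOf_a, ← this, ZMod.natCast_val, ZMod.cast_id]

lemma gcd_four_of_dvd (n d : ℕ) (hodd : Odd n) (hd : d ∣ 2 * n) :
    Nat.gcd d 4 = 1 ∨ (Nat.gcd d 4).Prime := by
  have h4 : Nat.gcd d 4 ∣ 4 := Nat.gcd_dvd_right d 4
  have hdd : Nat.gcd d 4 ∣ 2 * n := (Nat.gcd_dvd_left d 4).trans hd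
  have hpos : 0 < Nat.gcd d 4 := Nat.gcd_pos_of_pos_right _ (by norm_num)
  have hle : Nat.gcd d 4 ≤ 4 := Nat.le_of_dvd (by norm_num) h4
  interval_cases h : Nat.gcd d 4
  · left; rfl
  · right; exact Nat.prime_two
  · exfalso; norm_num at h4
  · exfalso
    obtain ⟨k, hk⟩ := hodd
    obtain ⟨m, hm⟩ := hdd
    omega

theorem dicyclic_iso_join (n : ℕ) [NeZero n] [NeZero (2 * n)] (hn : 3 ≤ n) (hodd : Odd n) :
    Nonempty (primeCoprimeGraph (QuaternionGroup n) ≃g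
      graphJoin (primeCoprimeGraph (Multiplicative (ZMod (2 * n))))
        (⊥ : SimpleGraph (Fin (2 * n)))) := by
  have e2 : ZMod (2 * n) ≃ Fin (2 * n) :=
    Fintype.equivFinOfCardEq (ZMod.card _)
  have horder : ∀ i : ZMod (2 * n),
      orderOf (Multiplicative.ofAdd i) = orderOf (QuaternionGroup.a (n := n) i) := fun i => by
    rw [orderOf_ofAdd_eq_addOrderOf, orderOf_a_eq_addOrderOf]
  have hdvd : ∀ i : ZMod (2 * n), orderOf (QuaternionGroup.a (n := n) i) ∣ 2 * n := fun i => by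
    rw [orderOf_a_eq_addOrderOf]
    have := addOrderOf_dvd_card (x := i)
    rwa [ZMod.card] at this
  refine ⟨⟨⟨fun x => match x with
      | QuaternionGroup.a i => Sum.inl (Multiplicative.ofAdd i)
      | QuaternionGroup.xa i => Sum.inr (e2 i),
    fun x => match x with
      | Sum.inl i => QuaternionGroup.a i.toAdd
      | Sum.inr j => QuaternionGroup.xa (e2.symm j),
    ?_, ?_⟩, ?_⟩⟩
  · rintro (i | i) <;> simp
  · rintro (i | j) <;> simp
  · rintro (i | i) (j | j)
    · show (primeCoprimeGraph _).Adj (Multiplicative.ofAdd i) (Multiplicative.ofAdd j) ↔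
        (primeCoprimeGraph _).Adj (QuaternionGroup.a i) (QuaternionGroup.a j)
      constructor
      · rintro ⟨h1, h2⟩
        refine ⟨?_, by rwa [horder, horder] at h2⟩
        intro h; apply h1; rw [QuaternionGroup.a.injEq] at h; rw [h]
      · rintro ⟨h1, h2⟩
        refine ⟨?_, by rwa [← horder, ← horder] at h2⟩
        intro h; apply h1
        have : i = j := by simpa using h
        rw [this]
    · show True ↔ (primeCoprimeGraph _).Adj (QuaternionGroup.a i) (QuaternionGroup.xa j)
      refine ⟨fun _ => ⟨by simp, ?_⟩, fun _ => trivial⟩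
      rw [QuaternionGroup.orderOf_xa]
      exact gcd_four_of_dvd n _ hodd (hdvd i)
    · show True ↔ (primeCoprimeGraph _).Adj (QuaternionGroup.xa i) (QuaternionGroup.a j)
      refine ⟨fun _ => ⟨by simp, ?_⟩, fun _ => trivial⟩
      rw [QuaternionGroup.orderOf_xa, Nat.gcd_comm]
      exact gcd_four_of_dvd n _ hodd (hdvd j)
    · show (⊥ : SimpleGraph (Fin (2 * n))).Adj (e2 i) (e2 j) ↔
        (primeCoprimeGraph _).Adj (QuaternionGroup.xa i) (QuaternionGroup.xa j)
      simp only [SimpleGraph.bot_adj, false_iff]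
      rintro ⟨-, h | h⟩ <;>
        rw [QuaternionGroup.orderOf_xa, QuaternionGroup.orderOf_xa] at h <;> norm_num at h
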